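/- Fix an integer n ≥ 1, reals p ∈ [0,1] and q ≥ 0, and a function γ : ℕ × ℕ → ℝ with 0 ≤ γ(k,d) ≤ 1 for all k, d. Define f̃(k) = q·Σ_{d=0}^{k−1} (1 − γ(k,d))·(k−d)·C(k,d)·p^d·(1−p)^{k−d}. Then the sequence N ↦ (⌊N/n⌋·f̃(n) + f̃(N − n·⌊N/n⌋)) / N converges, as N → ∞, to q·(1−p)·Σ_{d=0}^{n−1} (1 − γ(n,d))·C(n−1,d)·p^d·(1−p)^{n−1−d}. -/

import Mathlib

open Filter

/-- Expected number of false positives per person for linear array group testing: the total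
expected number of false positives `⌊N/n⌋·f̃(n) + f̃(N − n⌊N/n⌋)`, divided by `N`, converges as
`N → ∞` to `q·(1−p)·Σ_{d=0}^{n−1} (1 − γ(n,d))·C(n−1,d)·p^d·(1−p)^{n−1−d}`. -/
theorem linear_array_false_positives_per_person
    (n : ℕ) (hn : 1 ≤ n) (p : ℝ) (hp0 : 0 ≤ p) (hp1 : p ≤ 1) (q : ℝ) (hq : 0 ≤ q)
    (γ : ℕ → ℕ → ℝ) (hγ : ∀ k d, 0 ≤ γ k d ∧ γ k d ≤ 1)
    (ftil : ℕ → ℝ)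
    (hftil : ∀ k, ftil k = q * ∑ d ∈ Finset.range k,
      (1 - γ k d) * ((k - d : ℕ) : ℝ) * (k.choose d : ℝ) * p ^ d * (1 - p) ^ (k - d)) :
    Tendsto
      (fun N : ℕ => ((N / n : ℕ) * ftil n + ftil (N - n * (N / n))) / (N : ℝ))
      atTop
      (nhds (q * (1 - p) * ∑ d ∈ Finset.range n,
        (1 - γ n d) * ((n - 1).choose d : ℝ) * p ^ d * (1 - p) ^ (n - 1 - d))) := by
  have hn0 : (n : ℝ) ≠ 0 := Nat.cast_ne_zero.mpr (by omega)
  -- The key combinatorial identity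
  have key : ftil n = (n : ℝ) * (q * (1 - p) * ∑ d ∈ Finset.range n,
      (1 - γ n d) * ((n - 1).choose d : ℝ) * p ^ d * (1 - p) ^ (n - 1 - d)) := by
    rw [hftil n, Finset.mul_sum, Finset.mul_sum, Finset.mul_sum]
    refine Finset.sum_congr rfl fun d hd => ?_
    have hdn : d < n := Finset.mem_range.mp hd
    have hchoose : (n - d) * n.choose d = n * (n - 1).choose d := by
      obtain ⟨m, rfl⟩ : ∃ m, n = m + 1 := ⟨n - 1, by omega⟩
      have h1 := Nat.add_one_mul_choose_eq m d
      have h2 := Nat.choose_succ_right_eq (m + 1) d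
      simp only [Nat.succ_eq_add_one, Nat.add_sub_cancel] at h1 h2 ⊢
      calc (m + 1 - d) * (m + 1).choose d = (m + 1).choose d * (m + 1 - d) := mul_comm _ _
        _ = (m + 1).choose (d + 1) * (d + 1) := h2.symm
        _ = (m + 1) * m.choose d := h1.symm
    have hcast : ((n - d : ℕ) : ℝ) * (n.choose d : ℝ) = (n : ℝ) * ((n - 1).choose d : ℝ) := by
      exact_mod_cast congrArg (Nat.cast : ℕ → ℝ) hchoose
    have hpow : (1 - p) ^ (n - d) = (1 - p) * (1 - p) ^ (n - 1 - d) := by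
      have h : n - d = (n - 1 - d) + 1 := by omega
      rw [h, pow_succ]; ring
    rw [hpow]
    linear_combination q * (1 - γ n d) * p ^ d * ((1 - p) * (1 - p) ^ (n - 1 - d)) * hcast
  -- rewrite the function
  have hfun : ∀ N : ℕ, ((N / n : ℕ) * ftil n + ftil (N - n * (N / n))) / (N : ℝ)
      = ftil n * (((N / n : ℕ) : ℝ) / N) + ftil (N % n) / N := by
    intro N
    have h : N - n * (N / n) = N % n := by
      have := Nat.div_add_mod N n; omega
    rw [h, add_div, mul_div_assoc]; ring_nf
  -- the mod term tends to 0
  have hmod0 : Tendsto (fun N : ℕ => ftil (N % n) / N) atTop (nhds 0) := by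
    set C : ℝ := ∑ k ∈ Finset.range n, |ftil k| with hC
    have hCb : ∀ N : ℕ, |ftil (N % n)| ≤ C := by
      intro N
      exact Finset.single_le_sum (f := fun k => |ftil k|) (fun k _ => abs_nonneg _)
        (Finset.mem_range.mpr (Nat.mod_lt N (by omega)))
    refine squeeze_zero_norm (fun N => ?_) (tendsto_const_div_atTop_nhds_zero_nat C)
    rw [Real.norm_eq_abs, abs_div, abs_of_nonneg (by positivity : (0:ℝ) ≤ (N:ℝ))]
    exact div_le_div_of_nonneg_right (hCb N) (by positivity)
  -- (N % n)/N → 0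
  have hmodN : Tendsto (fun N : ℕ => ((N % n : ℕ) : ℝ) / N) atTop (nhds 0) := by
    refine squeeze_zero (fun N => by positivity) (fun N => ?_)
      (tendsto_const_div_atTop_nhds_zero_nat (n : ℝ))
    exact div_le_div_of_nonneg_right
      (by exact_mod_cast (Nat.mod_lt N (by omega : 0 < n)).le) (by positivity)
  -- (N / n)/N → 1/n
  have hdiv : Tendsto (fun N : ℕ => ((N / n : ℕ) : ℝ) / N) atTop (nhds (1 / n)) := by
    have h1 : Tendsto (fun N : ℕ => (1 - ((N % n : ℕ) : ℝ) / N) / n) atTop (nhds (1 / n)) := by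
      have := ((tendsto_const_nhds (x := (1:ℝ))).sub hmodN).div_const (n : ℝ)
      simpa using this
    refine h1.congr' ?_
    filter_upwards [eventually_ge_atTop 1] with N hN
    have hN0 : (N : ℝ) ≠ 0 := Nat.cast_ne_zero.mpr (by omega)
    have hdm : (n : ℝ) * ((N / n : ℕ) : ℝ) + ((N % n : ℕ) : ℝ) = (N : ℝ) := by
      exact_mod_cast congrArg (Nat.cast : ℕ → ℝ) (Nat.div_add_mod N n)
    field_simp
    linear_combination (-1 : ℝ) * hdm
  -- assemble
  have hmain : Tendsto (fun N : ℕ => ((N / n : ℕ) * ftil n + ftil (N - n * (N / n))) / (N : ℝ))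
      atTop (nhds (ftil n * (1 / n) + 0)) := by
    refine Tendsto.congr (fun N => (hfun N).symm) (((hdiv.const_mul (ftil n))).add hmod0)
  have : ftil n * (1 / (n : ℝ)) + 0 = q * (1 - p) * ∑ d ∈ Finset.range n,
      (1 - γ n d) * ((n - 1).choose d : ℝ) * p ^ d * (1 - p) ^ (n - 1 - d) := by
    rw [key]; field_simp; ring
  rwa [this] at hmain
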